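/- For a finite Borel measure μ on ℝ^d, 0 < q < 1 with μ being q-finite, every natural number n, and every ε > 0, one has n·ln(2^{d(q-1)}) ≤ ln(S_μ^q(ε)) − ln(S_μ^q(2^{-n}ε)) ≤ 0. -/

import Mathlib

open MeasureTheory Set

namespace Stmt4Aux

open ENNReal NNReal

def cube (d : ℕ) (ε : ℝ) (k : Fin d → ℤ) : Set (Fin d → ℝ) :=
  {x | ∀ i, ε * (k i : ℝ) ≤ x i ∧ x i < ε * ((k i : ℝ) + 1)}

noncomputable def T (d : ℕ) (μ : Measure (Fin d → ℝ)) (q : ℝ) (ε : ℝ) : ℝ≥0∞ :=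
  ∑' k : Fin d → ℤ, μ (cube d ε k) ^ q

lemma measurableSet_cube (d : ℕ) (ε : ℝ) (k : Fin d → ℤ) : MeasurableSet (cube d ε k) := by
  have : cube d ε k = Set.pi univ (fun i => Ico (ε * (k i : ℝ)) (ε * ((k i : ℝ) + 1))) := by
    ext x; simp [cube, Set.mem_pi, mem_Ico]
  rw [this]
  exact MeasurableSet.univ_pi fun i => measurableSet_Ico

lemma cube_eq_iUnion (d : ℕ) (ε : ℝ) (m : Fin d → ℤ) :
    cube d ε m = ⋃ b : Fin d → Bool,
      cube d (ε / 2) (fun i => 2 * m i + (if b i then 1 else 0)) := by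
  ext x
  simp only [cube, mem_setOf_eq, mem_iUnion]
  constructor
  · intro hx
    refine ⟨fun i => decide (ε / 2 * (2 * (m i : ℝ) + 1) ≤ x i), fun i => ?_⟩
    obtain ⟨h1, h2⟩ := hx i
    by_cases h : ε / 2 * (2 * (m i : ℝ) + 1) ≤ x i <;> simp [h] <;> push_cast <;>
      first
      | linarith
      | (constructor <;> linarith)
  · rintro ⟨b, hb⟩
    intro i
    obtain ⟨h1, h2⟩ := hb i
    cases h : b i <;> simp [h] at h1 h2 <;> push_cast at h1 h2 <;>
      constructor <;> linarith

lemma pairwise_disjoint_cube (d : ℕ) (ε : ℝ) (m : Fin d → ℤ) :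
    Pairwise (Function.onFun Disjoint (fun b : Fin d → Bool =>
      cube d (ε / 2) (fun i => 2 * m i + (if b i then 1 else 0)))) := by
  intro b b' hbb
  have hex : ∃ i, b i ≠ b' i := by
    by_contra h
    push_neg at h
    exact hbb (funext h)
  obtain ⟨i, hi⟩ := hex
  rw [Function.onFun, Set.disjoint_left]
  intro x hx hx'
  obtain ⟨h1, h2⟩ := hx i
  obtain ⟨h1', h2'⟩ := hx' i
  cases hb : b i <;> cases hb' : b' i
  · exact hi (by rw [hb, hb'])
  · simp [hb] at h1 h2; simp [hb'] at h1' h2'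
    push_cast at h1 h2 h1' h2'; linarith
  · simp [hb] at h1 h2; simp [hb'] at h1' h2'
    push_cast at h1 h2 h1' h2'; linarith
  · exact hi (by rw [hb, hb'])

lemma rpow_sum_le_sum_rpow {ι : Type*} (s : Finset ι) (a : ι → ℝ≥0∞) {q : ℝ}
    (hq0 : 0 < q) (hq1 : q ≤ 1) :
    (∑ i ∈ s, a i) ^ q ≤ ∑ i ∈ s, a i ^ q := by
  induction s using Finset.cons_induction with
  | empty => simp [ENNReal.zero_rpow_of_pos hq0]
  | cons i s his ih =>
    rw [Finset.sum_cons, Finset.sum_cons]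
    calc (a i + ∑ j ∈ s, a j) ^ q ≤ a i ^ q + (∑ j ∈ s, a j) ^ q :=
          ENNReal.rpow_add_le_add_rpow _ _ hq0.le hq1
      _ ≤ a i ^ q + ∑ j ∈ s, a j ^ q := by gcongr

lemma sum_rpow_le_card_mul {ι : Type*} [Fintype ι] [Nonempty ι] (a : ι → ℝ≥0∞) {q : ℝ}
    (hq0 : 0 < q) (hq1 : q ≤ 1) :
    ∑ i, a i ^ q ≤ (Fintype.card ι : ℝ≥0∞) ^ ((1:ℝ) - q) * (∑ i, a i) ^ q := by
  set m : ℝ≥0∞ := (Fintype.card ι : ℝ≥0∞) with hm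
  have hm0 : m ≠ 0 := by
    simp [hm, Fintype.card_ne_zero]
  have hmt : m ≠ ⊤ := by simp [hm]
  have hw : ∑ _i : ι, m⁻¹ = 1 := by
    rw [Finset.sum_const, nsmul_eq_mul, Finset.card_univ, ← hm, ENNReal.mul_inv_cancel hm0 hmt]
  have hp : (1:ℝ) ≤ 1 / q := by rw [le_div_iff₀ hq0, one_mul]; exact hq1
  have h := ENNReal.rpow_arith_mean_le_arith_mean_rpow Finset.univ (fun _ => m⁻¹)
    (fun i => a i ^ q) hw hp
  have hz : ∀ i : ι, (a i ^ q) ^ ((1:ℝ)/q) = a i := by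
    intro i
    rw [← ENNReal.rpow_mul, mul_one_div_cancel hq0.ne', ENNReal.rpow_one]
  simp only [hz] at h
  have h2 := ENNReal.rpow_le_rpow h hq0.le
  rw [← ENNReal.rpow_mul, one_div, inv_mul_cancel₀ hq0.ne', ENNReal.rpow_one] at h2
  rw [← Finset.mul_sum, ← Finset.mul_sum, ENNReal.mul_rpow_of_nonneg _ _ hq0.le] at h2
  calc ∑ i, a i ^ q = m * (m⁻¹ * ∑ i, a i ^ q) := by
        rw [← mul_assoc, ENNReal.mul_inv_cancel hm0 hmt, one_mul]
    _ ≤ m * (m⁻¹ ^ q * (∑ i, a i) ^ q) := by exact mul_le_mul_right h2 m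
    _ = (m * m⁻¹ ^ q) * (∑ i, a i) ^ q := by rw [mul_assoc]
    _ = m ^ ((1:ℝ) - q) * (∑ i, a i) ^ q := by
        congr 1
        have hne : m * (m ^ q)⁻¹ = m ^ (1:ℝ) * m ^ (-q) := by
          rw [ENNReal.rpow_one, ENNReal.rpow_neg]
        rw [ENNReal.inv_rpow, hne, ← ENNReal.rpow_add _ _ hm0 hmt, sub_eq_add_neg]

def e (d : ℕ) : ((Fin d → ℤ) × (Fin d → Bool)) ≃ (Fin d → ℤ) where
  toFun p := fun i => 2 * p.1 i + (if p.2 i then 1 else 0)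
  invFun k := (fun i => k i / 2, fun i => decide (k i % 2 = 1))
  left_inv p := by
    ext i
    · cases h : p.2 i <;> simp [h] <;> omega
    · cases h : p.2 i <;> simp [h] <;> omega
  right_inv k := by
    funext i
    rcases Int.emod_two_eq_zero_or_one (k i) with h | h <;> simp [h] <;> omega

lemma measure_cube_split (d : ℕ) (μ : Measure (Fin d → ℝ)) (ε : ℝ) (m : Fin d → ℤ) :
    μ (cube d ε m) = ∑ b : Fin d → Bool,
      μ (cube d (ε / 2) (fun i => 2 * m i + (if b i then 1 else 0))) := by
  rw [cube_eq_iUnion d ε m,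
    measure_iUnion (pairwise_disjoint_cube d ε m) (fun b => measurableSet_cube d _ _),
    tsum_fintype]

lemma T_half (d : ℕ) (μ : Measure (Fin d → ℝ)) (q : ℝ) (ε : ℝ) :
    T d μ q (ε / 2) = ∑' m : Fin d → ℤ, ∑ b : Fin d → Bool,
      μ (cube d (ε / 2) (fun i => 2 * m i + (if b i then 1 else 0))) ^ q := by
  have h := ENNReal.tsum_prod (f := fun (m : Fin d → ℤ) (b : Fin d → Bool) =>
    μ (cube d (ε / 2) (e d (m, b))) ^ q)
  rw [T, ← Equiv.tsum_eq (e d) (fun k => μ (cube d (ε / 2) k) ^ q)]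
  exact h.trans (tsum_congr fun m => tsum_fintype _)

lemma key (d : ℕ) (μ : Measure (Fin d → ℝ)) {q : ℝ} (hq0 : 0 < q) (hq1 : q ≤ 1) (ε : ℝ) :
    T d μ q ε ≤ T d μ q (ε / 2) ∧
      T d μ q (ε / 2) ≤ ((2 : ℝ≥0∞) ^ d) ^ ((1:ℝ) - q) * T d μ q ε := by
  have hcard : ((Fintype.card (Fin d → Bool) : ℝ≥0∞)) = (2 : ℝ≥0∞) ^ d := by
    simp [Fintype.card_fun]
  constructor
  · rw [T, T_half]
    refine ENNReal.tsum_le_tsum fun m => ?_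
    rw [measure_cube_split d μ ε m]
    exact rpow_sum_le_sum_rpow _ _ hq0 hq1
  · rw [T_half, T]
    calc (∑' m : Fin d → ℤ, ∑ b : Fin d → Bool,
          μ (cube d (ε / 2) (fun i => 2 * m i + (if b i then 1 else 0))) ^ q)
        ≤ ∑' m : Fin d → ℤ, ((2 : ℝ≥0∞) ^ d) ^ ((1:ℝ) - q) * μ (cube d ε m) ^ q := by
          refine ENNReal.tsum_le_tsum fun m => ?_
          rw [measure_cube_split d μ ε m]
          have := sum_rpow_le_card_mul
            (fun b : Fin d → Bool =>
              μ (cube d (ε / 2) (fun i => 2 * m i + (if b i then 1 else 0)))) hq0 hq1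
          rwa [hcard] at this
      _ = ((2 : ℝ≥0∞) ^ d) ^ ((1:ℝ) - q) * ∑' m : Fin d → ℤ, μ (cube d ε m) ^ q :=
          ENNReal.tsum_mul_left

lemma univ_subset_iUnion_cube (d : ℕ) {ε : ℝ} (hε : 0 < ε) :
    (univ : Set (Fin d → ℝ)) ⊆ ⋃ k : Fin d → ℤ, cube d ε k := by
  intro x _
  refine mem_iUnion.mpr ⟨fun i => ⌊x i / ε⌋, fun i => ?_⟩
  constructor
  · have h := Int.floor_le (x i / ε)
    rw [mul_comm]
    exact (le_div_iff₀ hε).mp h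
  · have h := Int.lt_floor_add_one (x i / ε)
    rw [mul_comm]
    exact (div_lt_iff₀ hε).mp h

lemma T_ne_zero (d : ℕ) (μ : Measure (Fin d → ℝ)) [IsFiniteMeasure μ]
    (hμ : μ univ ≠ 0) {q : ℝ} (hq0 : 0 < q) {ε : ℝ} (hε : 0 < ε) :
    T d μ q ε ≠ 0 := by
  intro h
  apply hμ
  have hz : ∀ k : Fin d → ℤ, μ (cube d ε k) = 0 := by
    intro k
    have hk := ENNReal.tsum_eq_zero.mp h k
    rcases ENNReal.rpow_eq_zero_iff.mp hk with ⟨h0, _⟩ | ⟨_, hneg⟩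
    · exact h0
    · linarith
  have hle : μ univ ≤ 0 := by
    calc μ univ ≤ μ (⋃ k : Fin d → ℤ, cube d ε k) :=
          measure_mono (univ_subset_iUnion_cube d hε)
      _ ≤ ∑' k : Fin d → ℤ, μ (cube d ε k) := measure_iUnion_le _
      _ = 0 := by simp [hz]
  exact le_antisymm hle zero_le

end Stmt4Aux

theorem stmt4 (d : ℕ) (μ : Measure (Fin d → ℝ)) [IsFiniteMeasure μ]
    (hμ : μ univ ≠ 0) (q : ℝ) (hq0 : 0 < q) (hq1 : q < 1)
    (hqfin : ∀ ε : ℝ, 0 < ε → (∑' k : Fin d → ℤ,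
        (μ {x | ∀ i, ε * (k i : ℝ) ≤ x i ∧ x i < ε * ((k i : ℝ) + 1)}) ^ q) < ⊤)
    (S : ℝ → ℝ)
    (hS : ∀ ε : ℝ, S ε = (∑' k : Fin d → ℤ,
        (μ {x | ∀ i, ε * (k i : ℝ) ≤ x i ∧ x i < ε * ((k i : ℝ) + 1)}) ^ q).toReal)
    (n : ℕ) (ε : ℝ) (hε : 0 < ε) :
    (n : ℝ) * Real.log (2 ^ ((d : ℝ) * (q - 1)))
        ≤ Real.log (S ε) - Real.log (S (2 ^ (-(n : ℝ)) * ε)) ∧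
      Real.log (S ε) - Real.log (S (2 ^ (-(n : ℝ)) * ε)) ≤ 0 := by
  open Stmt4Aux in
  have hST : ∀ ε : ℝ, S ε = (T d μ q ε).toReal := hS
  have hTfin : ∀ ε' : ℝ, 0 < ε' → Stmt4Aux.T d μ q ε' ≠ ⊤ := fun ε' hε' => (hqfin ε' hε').ne
  have hSpos : ∀ ε' : ℝ, 0 < ε' → 0 < S ε' := by
    intro ε' hε'
    rw [hST]
    exact ENNReal.toReal_pos (Stmt4Aux.T_ne_zero d μ hμ hq0 hε') (hTfin ε' hε')
  set C : ℝ := (2 : ℝ) ^ ((d : ℝ) * (1 - q)) with hC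
  have hCpos : 0 < C := Real.rpow_pos_of_pos two_pos _
  have hCtoReal : (((2 : ENNReal) ^ d) ^ ((1:ℝ) - q)).toReal = C := by
    rw [← ENNReal.toReal_rpow, ENNReal.toReal_pow, ENNReal.toReal_ofNat, hC,
      ← Real.rpow_natCast (2:ℝ) d, ← Real.rpow_mul (by norm_num)]
  have hCne : ((2 : ENNReal) ^ d) ^ ((1:ℝ) - q) ≠ ⊤ :=
    ENNReal.rpow_ne_top_of_nonneg (by linarith) (by simp)
  have rkey : ∀ ε' : ℝ, 0 < ε' → S ε' ≤ S (ε' / 2) ∧ S (ε' / 2) ≤ C * S ε' := by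
    intro ε' hε'
    have hε2 : 0 < ε' / 2 := by linarith
    obtain ⟨k1, k2⟩ := Stmt4Aux.key d μ hq0 hq1.le ε'
    constructor
    · rw [hST, hST]
      exact (ENNReal.toReal_le_toReal (hTfin ε' hε') (hTfin _ hε2)).mpr k1
    · rw [hST, hST, ← hCtoReal, ← ENNReal.toReal_mul]
      exact (ENNReal.toReal_le_toReal (hTfin _ hε2)
        (ENNReal.mul_ne_top hCne (hTfin ε' hε'))).mpr k2
  have ind : ∀ m : ℕ, S ε ≤ S (2 ^ (-(m : ℝ)) * ε) ∧
      S (2 ^ (-(m : ℝ)) * ε) ≤ C ^ m * S ε := by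
    intro m
    induction m with
    | zero => simp
    | succ m ih =>
      have hε' : 0 < 2 ^ (-(m : ℝ)) * ε :=
        mul_pos (Real.rpow_pos_of_pos two_pos _) hε
      have heq : (2 : ℝ) ^ (-((m+1 : ℕ) : ℝ)) * ε = (2 ^ (-(m : ℝ)) * ε) / 2 := by
        have h1 : (-((m+1 : ℕ) : ℝ)) = (-(m : ℝ)) + (-1) := by push_cast; ring
        rw [h1, Real.rpow_add two_pos, Real.rpow_neg_one]
        ring
      rw [heq]
      obtain ⟨r1, r2⟩ := rkey _ hε'
      constructor
      · exact ih.1.trans r1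
      · calc S ((2 ^ (-(m : ℝ)) * ε) / 2) ≤ C * S (2 ^ (-(m : ℝ)) * ε) := r2
          _ ≤ C * (C ^ m * S ε) := by
              exact mul_le_mul_of_nonneg_left ih.2 hCpos.le
          _ = C ^ (m + 1) * S ε := by ring
  have hεn : 0 < 2 ^ (-(n : ℝ)) * ε := mul_pos (Real.rpow_pos_of_pos two_pos _) hε
  have h1 : 0 < S ε := hSpos ε hε
  have h2 : 0 < S (2 ^ (-(n : ℝ)) * ε) := hSpos _ hεn
  obtain ⟨i1, i2⟩ := ind n
  constructor
  · have hlog : Real.log (S (2 ^ (-(n : ℝ)) * ε)) ≤ (n : ℝ) * Real.log C + Real.log (S ε) := by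
      have := (Real.log_le_log_iff h2 (by positivity)).mpr i2
      rwa [Real.log_mul (by positivity) h1.ne', Real.log_pow] at this
    rw [Real.log_rpow two_pos]
    rw [hC, Real.log_rpow two_pos] at hlog
    nlinarith [hlog]
  · have := (Real.log_le_log_iff h1 h2).mpr i1
    linarith
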